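/- For every integer n ≥ 1, with ω_j = jπ/(n+1), the following two-sided estimate holds: (2/π)·ln(n/2) ≤ (1/(n+1))·Σ_{j=1}^n 1/sin(ω_j) ≤ 1 + ln((n+1)/2). In particular, the maximal average amplitude 1 + (n+1)√n / Σ_{j=1}^n (1/sin ω_j) is of order O(√n / ln n) as n → ∞. -/

import Mathlib

open Finset Filter Asymptotics

/-- The sum `Σ_{j=1}^n csc(jπ/(n+1))`. -/
noncomputable def cscSum (n : ℕ) : ℝ :=
  ∑ j : Fin n, 1 / Real.sin (((j : ℕ) + 1) * Real.pi / (n + 1))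

/-- the comparison weight -/
noncomputable def gw (n j : ℕ) : ℝ :=
  if 2 * j ≤ n + 1 then ((j : ℝ))⁻¹ else (((n + 1 - j : ℕ) : ℝ))⁻¹

lemma cscSum_eq_Icc (n : ℕ) :
    cscSum n = ∑ j ∈ Finset.Icc 1 n, 1 / Real.sin (j * Real.pi / (n + 1)) := by
  rw [cscSum, Fin.sum_univ_eq_sum_range (fun j => 1 / Real.sin (((j:ℕ) + 1) * Real.pi / (n + 1))) n]
  apply Finset.sum_nbij' (fun j => j + 1) (fun j => j - 1)
  · intro a ha; simp at ha ⊢; try omega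
  · intro a ha; simp at ha ⊢; try omega
  · intro a ha; simp at ha ⊢; try omega
  · intro a ha; simp at ha ⊢; try omega
  · intro a ha; push_cast; ring_nf

lemma sin_arg_pos {n j : ℕ} (h1 : 1 ≤ j) (h2 : j ≤ n) :
    0 < Real.sin (j * Real.pi / (n + 1)) := by
  apply Real.sin_pos_of_pos_of_lt_pi
  · have := Real.pi_pos; positivity
  · rw [div_lt_iff₀ (by positivity)]
    have := Real.pi_pos
    have : (j : ℝ) < (n : ℝ) + 1 := by exact_mod_cast Nat.lt_succ_of_le h2
    nlinarith

lemma csc_ge {n j : ℕ} (h1 : 1 ≤ j) (h2 : j ≤ n) :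
    ((n : ℝ) + 1) / Real.pi * gw n j ≤ 1 / Real.sin (j * Real.pi / (n + 1)) := by
  have hpi := Real.pi_pos
  have hs := sin_arg_pos h1 h2
  have hj : (0 : ℝ) < j := by exact_mod_cast h1
  have hn1 : (0 : ℝ) < (n : ℝ) + 1 := by positivity
  rw [gw]
  split_ifs with hc
  · have hle : Real.sin (j * Real.pi / (n + 1)) ≤ j * Real.pi / (n + 1) :=
      Real.sin_le (by positivity)
    have := one_div_le_one_div_of_le hs hle
    calc ((n : ℝ) + 1) / Real.pi * (j : ℝ)⁻¹ = 1 / (j * Real.pi / (n + 1)) := by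
          field_simp
      _ ≤ _ := this
  · have hm : 1 ≤ n + 1 - j := by omega
    have hmr : ((n + 1 - j : ℕ) : ℝ) = (n : ℝ) + 1 - j := by
      push_cast [Nat.cast_sub (by omega : j ≤ n + 1)]; ring
    have hm0 : (0 : ℝ) < ((n + 1 - j : ℕ) : ℝ) := by exact_mod_cast hm
    have hkey : Real.sin (j * Real.pi / (n + 1)) ≤ ((n + 1 - j : ℕ) : ℝ) * Real.pi / (n + 1) := by
      have hrw : (j : ℝ) * Real.pi / (n + 1) = Real.pi - ((n + 1 - j : ℕ) : ℝ) * Real.pi / (n + 1) := by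
        rw [hmr]; field_simp; ring
      rw [hrw, Real.sin_pi_sub]
      exact Real.sin_le (by positivity)
    have := one_div_le_one_div_of_le hs hkey
    calc ((n : ℝ) + 1) / Real.pi * ((n + 1 - j : ℕ) : ℝ)⁻¹
        = 1 / (((n + 1 - j : ℕ) : ℝ) * Real.pi / (n + 1)) := by
          field_simp
      _ ≤ _ := this

lemma csc_le {n j : ℕ} (h1 : 1 ≤ j) (h2 : j ≤ n) :
    1 / Real.sin (j * Real.pi / (n + 1)) ≤ ((n : ℝ) + 1) / 2 * gw n j := by
  have hpi := Real.pi_pos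
  have hs := sin_arg_pos h1 h2
  have hj : (0 : ℝ) < j := by exact_mod_cast h1
  have hn1 : (0 : ℝ) < (n : ℝ) + 1 := by positivity
  rw [gw]
  split_ifs with hc
  · have hc' : 2 * (j : ℝ) ≤ (n : ℝ) + 1 := by exact_mod_cast hc
    have hhalf : (j : ℝ) * Real.pi / (n + 1) ≤ Real.pi / 2 := by
      rw [div_le_div_iff₀ (by positivity) (by norm_num)]
      nlinarith
    have hge : 2 / Real.pi * ((j : ℝ) * Real.pi / (n + 1)) ≤ Real.sin (j * Real.pi / (n + 1)) :=
      Real.mul_le_sin (by positivity) hhalf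
    have h2j : 2 / Real.pi * ((j : ℝ) * Real.pi / (n + 1)) = 2 * j / (n + 1) := by
      field_simp
    rw [h2j] at hge
    have := one_div_le_one_div_of_le (by positivity) hge
    calc 1 / Real.sin (j * Real.pi / (n + 1)) ≤ 1 / (2 * (j : ℝ) / (n + 1)) := this
      _ = ((n : ℝ) + 1) / 2 * (j : ℝ)⁻¹ := by rw [one_div_div]; ring
  · have hm : 1 ≤ n + 1 - j := by omega
    have hmr : ((n + 1 - j : ℕ) : ℝ) = (n : ℝ) + 1 - j := by
      push_cast [Nat.cast_sub (by omega : j ≤ n + 1)]; ring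
    have hm0 : (0 : ℝ) < ((n + 1 - j : ℕ) : ℝ) := by exact_mod_cast hm
    have hc' : 2 * ((n + 1 - j : ℕ) : ℝ) ≤ (n : ℝ) + 1 := by
      have : 2 * (n + 1 - j) ≤ n + 1 := by omega
      exact_mod_cast this
    have hrw : (j : ℝ) * Real.pi / (n + 1) = Real.pi - ((n + 1 - j : ℕ) : ℝ) * Real.pi / (n + 1) := by
      rw [hmr]; field_simp; ring
    have hhalf : ((n + 1 - j : ℕ) : ℝ) * Real.pi / (n + 1) ≤ Real.pi / 2 := by
      rw [div_le_div_iff₀ (by positivity) (by norm_num)]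
      nlinarith
    have hge : 2 / Real.pi * (((n + 1 - j : ℕ) : ℝ) * Real.pi / (n + 1)) ≤
        Real.sin (j * Real.pi / (n + 1)) := by
      rw [hrw, Real.sin_pi_sub]
      exact Real.mul_le_sin (by positivity) hhalf
    have h2j : 2 / Real.pi * (((n + 1 - j : ℕ) : ℝ) * Real.pi / (n + 1))
        = 2 * ((n + 1 - j : ℕ) : ℝ) / (n + 1) := by
      field_simp
    rw [h2j] at hge
    have := one_div_le_one_div_of_le (by positivity) hge
    calc 1 / Real.sin (j * Real.pi / (n + 1)) ≤ 1 / (2 * ((n + 1 - j : ℕ) : ℝ) / (n + 1)) := this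
      _ = ((n : ℝ) + 1) / 2 * ((n + 1 - j : ℕ) : ℝ)⁻¹ := by rw [one_div_div]; field_simp; try ring

lemma Ioc_zero_eq (m : ℕ) : Finset.Ioc 0 m = Finset.Icc 1 m := by
  ext x; simp [Finset.mem_Ioc, Finset.mem_Icc]; omega

lemma harmonic_real (m : ℕ) : (harmonic m : ℝ) = ∑ j ∈ Finset.Icc 1 m, (j : ℝ)⁻¹ := by
  rw [harmonic_eq_sum_Icc]; push_cast; rfl

lemma harmonic_mono_real {a b : ℕ} (h : a ≤ b) : (harmonic a : ℝ) ≤ (harmonic b : ℝ) := by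
  rw [harmonic_real, harmonic_real]
  apply Finset.sum_le_sum_of_subset_of_nonneg
  · exact Finset.Icc_subset_Icc_right h
  · intro i _ _; positivity

lemma sum_gw (n : ℕ) (hn : 1 ≤ n) :
    ∑ j ∈ Finset.Icc 1 n, gw n j
      = (harmonic ((n + 1) / 2) : ℝ) + (harmonic (n - (n + 1) / 2) : ℝ) := by
  set K := (n + 1) / 2 with hK
  have hKn : K ≤ n := by omega
  have hsplit : ∑ j ∈ Finset.Ioc 0 K, gw n j + ∑ j ∈ Finset.Ioc K n, gw n j
      = ∑ j ∈ Finset.Ioc 0 n, gw n j :=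
    Finset.sum_Ioc_consecutive _ (Nat.zero_le K) hKn
  rw [Ioc_zero_eq] at hsplit
  rw [← Ioc_zero_eq, ← hsplit]
  congr 1
  · rw [harmonic_real]
    apply Finset.sum_congr rfl
    intro j hj
    simp only [Finset.mem_Icc] at hj
    rw [gw, if_pos (by omega)]
  · rw [harmonic_real]
    apply Finset.sum_nbij' (fun j => n + 1 - j) (fun k => n + 1 - k)
    · intro a ha; simp only [Finset.mem_Ioc, Finset.mem_Icc] at ha ⊢; omega
    · intro a ha; simp only [Finset.mem_Ioc, Finset.mem_Icc] at ha ⊢; omega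
    · intro a ha; simp only [Finset.mem_Ioc, Finset.mem_Icc] at ha ⊢; omega
    · intro a ha; simp only [Finset.mem_Ioc, Finset.mem_Icc] at ha ⊢; omega
    · intro a ha; simp only [Finset.mem_Ioc] at ha
      rw [gw, if_neg (by omega)]

lemma main_bounds (n : ℕ) (hn : 1 ≤ n) :
    (2 / Real.pi) * Real.log ((n : ℝ) / 2) ≤ (1 / ((n : ℝ) + 1)) * cscSum n ∧
    (1 / ((n : ℝ) + 1)) * cscSum n ≤ 1 + Real.log (((n : ℝ) + 1) / 2) := by
  have hpi := Real.pi_pos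
  set K := (n + 1) / 2 with hKdef
  have hK1 : 1 ≤ K := by omega
  have hKn : K ≤ n := by omega
  have hn1 : (0 : ℝ) < (n : ℝ) + 1 := by positivity
  set HK := (harmonic K : ℝ) with hHK
  set Hm := (harmonic (n - K) : ℝ) with hHm
  have hS_lb : ((n : ℝ) + 1) / Real.pi * (HK + Hm) ≤ cscSum n := by
    rw [cscSum_eq_Icc, hHK, hHm, ← sum_gw n hn, Finset.mul_sum]
    apply Finset.sum_le_sum
    intro j hj
    simp only [Finset.mem_Icc] at hj
    exact csc_ge hj.1 hj.2
  have hS_ub : cscSum n ≤ ((n : ℝ) + 1) / 2 * (HK + Hm) := by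
    rw [cscSum_eq_Icc, hHK, hHm, ← sum_gw n hn, Finset.mul_sum]
    apply Finset.sum_le_sum
    intro j hj
    simp only [Finset.mem_Icc] at hj
    exact csc_le hj.1 hj.2
  have hlog1 : Real.log ((n : ℝ) / 2) ≤ HK := by
    refine le_trans ?_ (log_add_one_le_harmonic K)
    apply Real.log_le_log (by positivity)
    have : n ≤ 2 * (K + 1) := by omega
    have : (n : ℝ) ≤ 2 * ((K : ℝ) + 1) := by exact_mod_cast this
    push_cast
    linarith
  have hlog2 : Real.log ((n : ℝ) / 2) ≤ Hm := by
    refine le_trans ?_ (log_add_one_le_harmonic (n - K))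
    apply Real.log_le_log (by positivity)
    have : n ≤ 2 * ((n - K) + 1) := by omega
    have : (n : ℝ) ≤ 2 * (((n - K : ℕ) : ℝ) + 1) := by exact_mod_cast this
    push_cast
    linarith
  have hmK : Hm ≤ HK := harmonic_mono_real (by omega)
  have hHK_ub : HK ≤ 1 + Real.log (((n : ℝ) + 1) / 2) := by
    refine le_trans (harmonic_le_one_add_log K) ?_
    have hcast : (K : ℝ) ≤ ((n : ℝ) + 1) / 2 := by
      have : 2 * K ≤ n + 1 := by omega
      have : 2 * (K : ℝ) ≤ (n : ℝ) + 1 := by exact_mod_cast this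
      linarith
    have : Real.log K ≤ Real.log (((n : ℝ) + 1) / 2) :=
      Real.log_le_log (by exact_mod_cast hK1) hcast
    linarith
  constructor
  · calc (2 / Real.pi) * Real.log ((n : ℝ) / 2)
        = (1 / ((n : ℝ) + 1)) * (((n : ℝ) + 1) / Real.pi
            * (Real.log ((n : ℝ) / 2) + Real.log ((n : ℝ) / 2))) := by
          field_simp; ring
      _ ≤ (1 / ((n : ℝ) + 1)) * (((n : ℝ) + 1) / Real.pi * (HK + Hm)) := by
          apply mul_le_mul_of_nonneg_left _ (by positivity)
          exact mul_le_mul_of_nonneg_left (add_le_add hlog1 hlog2) (by positivity)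
      _ ≤ (1 / ((n : ℝ) + 1)) * cscSum n :=
          mul_le_mul_of_nonneg_left hS_lb (by positivity)
  · calc (1 / ((n : ℝ) + 1)) * cscSum n
        ≤ (1 / ((n : ℝ) + 1)) * (((n : ℝ) + 1) / 2 * (HK + Hm)) :=
          mul_le_mul_of_nonneg_left hS_ub (by positivity)
      _ ≤ (1 / ((n : ℝ) + 1)) * (((n : ℝ) + 1) / 2 * (HK + HK)) := by
          apply mul_le_mul_of_nonneg_left _ (by positivity)
          exact mul_le_mul_of_nonneg_left (add_le_add le_rfl hmK) (by positivity)
      _ = HK := by field_simp; ring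
      _ ≤ 1 + Real.log (((n : ℝ) + 1) / 2) := hHK_ub

/-- for every `n ≥ 1`,
`(2/π)·ln(n/2) ≤ (1/(n+1))·Σ_{j=1}^n csc(jπ/(n+1)) ≤ 1 + ln((n+1)/2)`;
in particular the maximal average amplitude `1 + (n+1)√n/Σ_{j=1}^n csc(ω_j)` is
`O(√n/ln n)` as `n → ∞`. -/
theorem stmt17 :
    (∀ n : ℕ, 1 ≤ n →
      (2 / Real.pi) * Real.log ((n : ℝ) / 2) ≤ (1 / ((n : ℝ) + 1)) * cscSum n ∧
      (1 / ((n : ℝ) + 1)) * cscSum n ≤ 1 + Real.log (((n : ℝ) + 1) / 2)) ∧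
    (fun n : ℕ => 1 + ((n : ℝ) + 1) * Real.sqrt n / cscSum n) =O[atTop]
      (fun n : ℕ => Real.sqrt n / Real.log n) := by
  refine ⟨fun n hn => main_bounds n hn, ?_⟩
  rw [isBigO_iff]
  refine ⟨2 + Real.pi, ?_⟩
  filter_upwards [eventually_ge_atTop 4] with n hn
  have hpi := Real.pi_pos
  have h4 : (4 : ℝ) ≤ (n : ℝ) := by exact_mod_cast hn
  have hlogn : 0 < Real.log n := Real.log_pos (by linarith)
  have hsq : 0 < Real.sqrt n := Real.sqrt_pos.mpr (by linarith)
  have hn1 : (0 : ℝ) < (n : ℝ) + 1 := by linarith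
  have hL : 0 < Real.log ((n : ℝ) / 2) := Real.log_pos (by linarith)
  set L := Real.log ((n : ℝ) / 2) with hLdef
  have hmb := (main_bounds n (by omega)).1
  have hlb : ((n : ℝ) + 1) * ((2 / Real.pi) * L) ≤ cscSum n := by
    have := mul_le_mul_of_nonneg_left hmb (le_of_lt hn1)
    calc ((n : ℝ) + 1) * ((2 / Real.pi) * L)
        ≤ ((n : ℝ) + 1) * ((1 / ((n : ℝ) + 1)) * cscSum n) := this
      _ = cscSum n := by field_simp
  have hpos : 0 < cscSum n := lt_of_lt_of_le (by positivity) hlb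
  have hhalf : Real.log n / 2 ≤ L := by
    have h1 : Real.log 4 ≤ Real.log n := Real.log_le_log (by norm_num) h4
    have l4 : Real.log 4 = 2 * Real.log 2 := by
      rw [show (4 : ℝ) = 2 ^ 2 by norm_num, Real.log_pow]; push_cast; ring
    rw [hLdef, Real.log_div (by linarith) (by norm_num)]
    linarith
  have hterm : ((n : ℝ) + 1) * Real.sqrt n / cscSum n
      ≤ Real.pi * (Real.sqrt n / Real.log n) := by
    calc ((n : ℝ) + 1) * Real.sqrt n / cscSum n
        ≤ ((n : ℝ) + 1) * Real.sqrt n / (((n : ℝ) + 1) * ((2 / Real.pi) * L)) := by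
          gcongr
      _ = Real.pi * Real.sqrt n / (2 * L) := by
          field_simp
      _ ≤ Real.pi * Real.sqrt n / (2 * (Real.log n / 2)) := by
          gcongr

      _ = Real.pi * (Real.sqrt n / Real.log n) := by
          rw [mul_div_assoc]
          congr 1
          congr 1
          ring
  have hone : 1 ≤ 2 * (Real.sqrt n / Real.log n) := by
    have hls : Real.log (Real.sqrt n) ≤ Real.sqrt n - 1 := Real.log_le_sub_one_of_pos hsq
    have hlogsq : Real.log n = 2 * Real.log (Real.sqrt n) := by
      rw [Real.log_sqrt (by linarith)]; ring
    have hlog_le : Real.log n ≤ 2 * Real.sqrt n := by linarith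
    rw [show 2 * (Real.sqrt n / Real.log n) = 2 * Real.sqrt n / Real.log n by ring]
    rw [le_div_iff₀ hlogn]
    linarith
  have htermpos : 0 ≤ ((n : ℝ) + 1) * Real.sqrt n / cscSum n := by positivity
  rw [Real.norm_eq_abs, Real.norm_eq_abs,
    abs_of_pos (by linarith : (0:ℝ) < 1 + ((n : ℝ) + 1) * Real.sqrt n / cscSum n),
    abs_of_pos (by positivity : (0:ℝ) < Real.sqrt n / Real.log n)]
  nlinarith [hterm, hone]
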